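/- Let H be a hypergraph on n vertices with zeon incidence representation Γ_H ∈ 𝔷_n. Then for every k ∈ ℕ, Γ_H^k ≠ 0 if and only if H contains a k-matching, i.e. k pairwise disjoint hyperedges. -/

import Mathlib

open Finset

/-- Regular-representation action of the zeon blade `ζ_I` (product of the zeon generators
`ζ_i`, `i ∈ I`, which commute and satisfy `ζ_i ^ 2 = 0`) on the coefficient space of the
zeon algebra `𝔷_n`:  multiplication by `ζ_I` sends the basis blade `ζ_S` to `ζ_{I ∪ S}`
when `I` and `S` are disjoint, and to `0` otherwise. -/
noncomputable def zetaBlade (n : ℕ) (I : Finset (Fin n)) :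
    Module.End ℝ (Finset (Fin n) → ℝ) where
  toFun c := fun S => if I ⊆ S then c (S \ I) else 0
  map_add' x y := by
    funext S
    by_cases h : I ⊆ S <;> simp [h]
  map_smul' r x := by
    funext S
    by_cases h : I ⊆ S <;> simp [h]

lemma zetaBlade_apply {n : ℕ} (I : Finset (Fin n)) (c : Finset (Fin n) → ℝ)
    (S : Finset (Fin n)) :
    zetaBlade n I c S = if I ⊆ S then c (S \ I) else 0 := rfl

lemma gamma_apply {n : ℕ} (E : Finset (Finset (Fin n))) (c : Finset (Fin n) → ℝ)
    (S : Finset (Fin n)) :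
    ((∑ e ∈ E, zetaBlade n e) c) S = ∑ e ∈ E, if e ⊆ S then c (S \ e) else 0 := by
  rw [LinearMap.sum_apply, Finset.sum_apply]
  rfl

lemma gamma_pow_nonneg {n : ℕ} (E : Finset (Finset (Fin n))) (k : ℕ)
    (c : Finset (Fin n) → ℝ) (hc : ∀ T, 0 ≤ c T) :
    ∀ T, 0 ≤ (((∑ e ∈ E, zetaBlade n e) ^ k) c) T := by
  induction k with
  | zero => simpa using hc
  | succ m ih =>
    intro T
    rw [pow_succ', Module.End.mul_apply, gamma_apply]
    refine Finset.sum_nonneg fun e _ => ?_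
    by_cases h : e ⊆ T
    · simpa [h] using ih _
    · simp [h]

lemma gamma_pow_pos {n : ℕ} (E : Finset (Finset (Fin n))) :
    ∀ M : Finset (Finset (Fin n)), M ⊆ E →
      (∀ a ∈ M, ∀ b ∈ M, a ≠ b → Disjoint a b) →
      ∀ (S : Finset (Fin n)) (c : Finset (Fin n) → ℝ),
        (∀ a ∈ M, Disjoint a S) → (∀ T, 0 ≤ c T) → 0 < c S →
        0 < (((∑ e ∈ E, zetaBlade n e) ^ M.card) c) (S ∪ M.sup id) := by
  intro M
  induction M using Finset.induction_on with
  | empty => intro _ _ S c _ _ hS; simpa using hS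
  | insert _ _ he =>
    rename_i e M' ih
    intro hME hdisj S c hdS hc hS
    have heE : e ∈ E := hME (mem_insert_self e M')
    have hM'E : M' ⊆ E := fun b hb => hME (mem_insert_of_mem hb)
    have hdisj' : ∀ a ∈ M', ∀ b ∈ M', a ≠ b → Disjoint a b :=
      fun a ha b hb => hdisj a (mem_insert_of_mem ha) b (mem_insert_of_mem hb)
    have hdS' : ∀ a ∈ M', Disjoint a S := fun a ha => hdS a (mem_insert_of_mem ha)
    have hih := ih hM'E hdisj' S c hdS' hc hS
    have heM' : Disjoint e (M'.sup id) := by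
      rw [Finset.disjoint_sup_right]
      intro b hb
      exact hdisj e (mem_insert_self _ _) b (mem_insert_of_mem hb)
        (by rintro rfl; exact he hb)
    have heS : Disjoint e S := hdS e (mem_insert_self _ _)
    have hsup : (insert e M').sup id = e ∪ M'.sup id := by
      simp [Finset.sup_insert]
    have hset : (S ∪ (e ∪ M'.sup id)) \ e = S ∪ M'.sup id := by
      ext x
      simp only [mem_sdiff, mem_union]
      constructor
      · rintro ⟨h1 | h2 | h3, hx⟩
        · exact Or.inl h1
        · exact absurd h2 hx
        · exact Or.inr h3
      · rintro (h1 | h2)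
        · exact ⟨Or.inl h1, Finset.disjoint_right.mp heS h1⟩
        · exact ⟨Or.inr (Or.inr h2), Finset.disjoint_right.mp heM' h2⟩
    rw [card_insert_of_notMem he, pow_succ', Module.End.mul_apply, hsup, gamma_apply]
    have hesub : e ⊆ S ∪ (e ∪ M'.sup id) :=
      Finset.subset_union_left.trans Finset.subset_union_right
    refine Finset.sum_pos' (fun b _ => ?_) ⟨e, heE, ?_⟩
    · by_cases h : b ⊆ S ∪ (e ∪ M'.sup id)
      · simpa [h] using gamma_pow_nonneg E M'.card c hc _
      · simp [h]
    · rw [if_pos hesub, hset]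
      exact hih

lemma gamma_pow_matching {n : ℕ} (E : Finset (Finset (Fin n)))
    (hE : ∀ e ∈ E, e.Nonempty) :
    ∀ (k : ℕ) (c : Finset (Fin n) → ℝ) (S : Finset (Fin n)),
      (((∑ e ∈ E, zetaBlade n e) ^ k) c) S ≠ 0 →
      ∃ M : Finset (Finset (Fin n)), M ⊆ E ∧ M.card = k ∧
        (∀ a ∈ M, ∀ b ∈ M, a ≠ b → Disjoint a b) ∧ M.sup id ⊆ S := by
  intro k
  induction k with
  | zero =>
    intro c S _
    exact ⟨∅, by simp, by simp, by simp, by simp⟩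
  | succ m ih =>
    intro c S h
    rw [pow_succ', Module.End.mul_apply, gamma_apply] at h
    obtain ⟨e, heE, hne⟩ := Finset.exists_ne_zero_of_sum_ne_zero h
    have heS : e ⊆ S := by
      by_contra hcon
      simp [hcon] at hne
    rw [if_pos heS] at hne
    obtain ⟨M', hM'E, hcard, hdisj, hsub⟩ := ih _ _ hne
    have hsub' : ∀ b ∈ M', b ⊆ S \ e := fun b hb => (Finset.le_sup (f := id) hb).trans hsub
    have heM' : e ∉ M' := by
      intro hmem
      obtain ⟨x, hx⟩ := hE e heE
      exact (mem_sdiff.mp (hsub' e hmem hx)).2 hx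
    refine ⟨insert e M', ?_, ?_, ?_, ?_⟩
    · exact Finset.insert_subset heE hM'E
    · rw [card_insert_of_notMem heM', hcard]
    · intro a ha b hb hab
      rcases mem_insert.mp ha with rfl | ha' <;> rcases mem_insert.mp hb with rfl | hb'
      · exact absurd rfl hab
      · exact Finset.disjoint_left.mpr fun x hx hxb => (mem_sdiff.mp (hsub' b hb' hxb)).2 hx
      · exact Finset.disjoint_right.mpr fun x hx hxa => (mem_sdiff.mp (hsub' a ha' hxa)).2 hx
      · exact hdisj a ha' b hb' hab
    · rw [Finset.sup_insert]
      exact Finset.union_subset heS (hsub.trans (Finset.sdiff_subset))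

/-- Let `H` be a hypergraph on `n` vertices with (nonempty) hyperedge
set `E`, and let `Γ_H = Σ_{e ∈ E} ζ_e` be its zeon incidence representation.  Then for
every `k ∈ ℕ`, `Γ_H^k ≠ 0` if and only if `H` contains a `k`-matching, i.e. `k`
pairwise disjoint hyperedges. -/
theorem zeon_incidence_power_ne_zero_iff_matching {n : ℕ}
    (E : Finset (Finset (Fin n))) (hE : ∀ e ∈ E, e.Nonempty) (k : ℕ) :
    (∑ e ∈ E, zetaBlade n e) ^ k ≠ 0 ↔
      ∃ M : Finset (Finset (Fin n)), M ⊆ E ∧ M.card = k ∧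
        ∀ a ∈ M, ∀ b ∈ M, a ≠ b → Disjoint a b := by
  constructor
  · intro h
    have hex : ∃ c S, (((∑ e ∈ E, zetaBlade n e) ^ k) c) S ≠ 0 := by
      by_contra hcon
      push_neg at hcon
      exact h (LinearMap.ext fun c => funext fun S => hcon c S)
    obtain ⟨c, S, hne⟩ := hex
    obtain ⟨M, h1, h2, h3, _⟩ := gamma_pow_matching E hE k c S hne
    exact ⟨M, h1, h2, h3⟩
  · rintro ⟨M, hME, hcard, hdisj⟩ h0
    have hpos := gamma_pow_pos E M hME hdisj ∅
      (fun S => if S = ∅ then 1 else 0)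
      (fun a _ => Finset.disjoint_empty_right a)
      (fun T => by by_cases h : T = (∅ : Finset (Fin n)) <;> simp [h])
      (by simp)
    rw [hcard, h0] at hpos
    simp at hpos
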